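/- Fix a prime p and let z ∈ ℤ_p be a p-adic integer. Then the limit μ_p(z,1) = lim_{n→∞} 2^{1−n} · #{ a/b ∈ T^(n) : ord_p(a/b − z) ≥ 1 } exists and equals 1/(p+1). -/

import Mathlib

open scoped Classical

/-- Generations of the Calkin–Wilf tree: `cwGen 0 = [1]` is the first
generation (`cwGen (n-1)` is the `n`-th generation `T^{(n)}`, having `2^{n-1}`
elements), and each vertex `a/b` has children `a/(a+b) = q/(q+1)` and
`(a+b)/b = q+1`. -/
def cwGen : ℕ → List ℚ
  | 0 => [1]
  | (n + 1) => (cwGen n).flatMap fun q => [q / (q + 1), q + 1]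

namespace CWAux

variable (p : ℕ) [hp : Fact p.Prime]

/-- State space: `P¹(F_p)`, with `none = ∞` and `some x = [x : 1]`. -/
abbrev S := Option (ZMod p)

/-- Action of `q ↦ q + 1` on residue states. -/
def Rmap : S p → S p
  | none => none
  | some x => some (x + 1)

/-- Action of `q ↦ q / (q + 1)` on residue states. -/
def Lmap : S p → S p
  | none => some 1
  | some x => if x + 1 = 0 then none else some (x / (x + 1))

/-- Inverse of `Rmap`. -/
def Rinv : S p → S p
  | none => none
  | some x => some (x - 1)

/-- Inverse of `Lmap`. -/
def Linv : S p → S p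
  | none => some (-1)
  | some y => if y = 1 then none else some (y / (1 - y))

lemma Linv_Lmap (s : S p) : Linv p (Lmap p s) = s := by
  cases s with
  | none => simp [Lmap, Linv]
  | some x =>
    by_cases h : x + 1 = 0
    · have : x = -1 := by linear_combination h
      simp [Lmap, Linv, h, this]
    · have h1 : x / (x + 1) ≠ 1 := by
        intro hc
        rw [div_eq_one_iff_eq h] at hc
        simp at hc
      have h2 : 1 - x / (x + 1) = 1 / (x + 1) := by
        field_simp
        ring
      simp only [Lmap, Linv, if_neg h, if_neg h1, h2]
      congr 1
      field_simp

lemma Lmap_Linv (s : S p) : Lmap p (Linv p s) = s := by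
  cases s with
  | none => simp [Lmap, Linv]
  | some y =>
    by_cases h : y = 1
    · simp [Lmap, Linv, h]
    · have hy : (1 : ZMod p) - y ≠ 0 := by
        intro hc; apply h; linear_combination -hc
      have h2 : y / (1 - y) + 1 = 1 / (1 - y) := by field_simp; ring
      simp only [Linv, Lmap, if_neg h, h2]
      rw [if_neg (by simp [hy])]
      congr 1
      field_simp

lemma Lmap_eq_iff (s t : S p) : Lmap p t = s ↔ t = Linv p s := by
  constructor
  · rintro rfl; rw [Linv_Lmap]
  · rintro rfl; rw [Lmap_Linv]

lemma Rinv_Rmap (s : S p) : Rinv p (Rmap p s) = s := by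
  cases s <;> simp [Rmap, Rinv]

lemma Rmap_Rinv (s : S p) : Rmap p (Rinv p s) = s := by
  cases s <;> simp [Rmap, Rinv]

lemma Rmap_eq_iff (s t : S p) : Rmap p t = s ↔ t = Rinv p s := by
  constructor
  · rintro rfl; rw [Rinv_Rmap]
  · rintro rfl; rw [Rmap_Rinv]

/-- Constructor for `ℤ_[p]` elements. -/
def mk (x : ℚ_[p]) (h : ‖x‖ ≤ 1) : ℤ_[p] := ⟨x, h⟩

@[simp] lemma coe_mk (x : ℚ_[p]) (h : ‖x‖ ≤ 1) : ((mk p x h : ℤ_[p]) : ℚ_[p]) = x := rfl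

/-- The residue state of a rational number. -/
noncomputable def phi (q : ℚ) : S p :=
  if h : ‖(q : ℚ_[p])‖ ≤ 1 then some (PadicInt.toZMod (mk p ((q : ℚ_[p])) h)) else none

lemma toZMod_eq_zero_iff (x : ℤ_[p]) :
    PadicInt.toZMod x = 0 ↔ ‖x‖ ≤ ((p : ℝ))⁻¹ := by
  have h1 : PadicInt.toZMod x = 0 ↔ x ∈ IsLocalRing.maximalIdeal ℤ_[p] := by
    rw [← PadicInt.ker_toZMod, RingHom.mem_ker]
  rw [h1, PadicInt.maximalIdeal_eq_span_p]
  have h2 := PadicInt.norm_le_pow_iff_mem_span_pow x 1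
  rw [pow_one] at h2
  rw [← h2]
  norm_num

lemma toZMod_eq_iff (x y : ℤ_[p]) :
    PadicInt.toZMod x = PadicInt.toZMod y ↔ ‖x - y‖ ≤ ((p : ℝ))⁻¹ := by
  rw [← sub_eq_zero, ← map_sub, toZMod_eq_zero_iff]

lemma norm_le_inv_iff_lt_one (x : ℚ_[p]) : ‖x‖ ≤ ((p : ℝ))⁻¹ ↔ ‖x‖ < 1 := by
  have h := Padic.norm_le_pow_iff_norm_lt_pow_add_one x (-1)
  simpa using h

lemma norm_int_le_inv_iff_lt_one (x : ℤ_[p]) : ‖x‖ ≤ ((p : ℝ))⁻¹ ↔ ‖x‖ < 1 := by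
  rw [PadicInt.norm_def]; exact norm_le_inv_iff_lt_one p _

lemma norm_cond_iff (z : ℤ_[p]) (q : ℚ) :
    (‖(q : ℚ_[p]) - (z : ℚ_[p])‖ ≤ ((p : ℝ))⁻¹) ↔ phi p q = some (PadicInt.toZMod z) := by
  by_cases h : ‖(q : ℚ_[p])‖ ≤ 1
  · rw [phi, dif_pos h]
    have hco : ‖((mk p ((q : ℚ_[p])) h - z : ℤ_[p]) : ℚ_[p])‖ = ‖(q : ℚ_[p]) - (z : ℚ_[p])‖ := by
      rw [PadicInt.coe_sub, coe_mk]
    rw [Option.some_inj, toZMod_eq_iff, PadicInt.norm_def, hco]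
  · rw [phi, dif_neg h]
    simp only [iff_false, reduceCtorEq]
    intro hle
    apply h
    have h1 : ‖(q : ℚ_[p])‖ ≤ max ‖(q : ℚ_[p]) - (z : ℚ_[p])‖ ‖(z : ℚ_[p])‖ := by
      simpa using Padic.nonarchimedean ((q : ℚ_[p]) - (z : ℚ_[p])) (z : ℚ_[p])
    have hz : ‖(z : ℚ_[p])‖ ≤ 1 := z.2
    have hp1 : ((p : ℝ))⁻¹ ≤ 1 := by
      rw [inv_le_one_iff₀]
      right
      exact_mod_cast hp.out.one_le
    exact h1.trans (max_le (hle.trans hp1) hz)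

lemma phi_add_one (q : ℚ) : phi p (q + 1) = Rmap p (phi p q) := by
  have hcast : (((q + 1 : ℚ)) : ℚ_[p]) = (q : ℚ_[p]) + 1 := by push_cast; ring
  by_cases h : ‖(q : ℚ_[p])‖ ≤ 1
  · have hq1 : ‖(((q + 1 : ℚ)) : ℚ_[p])‖ ≤ 1 := by
      rw [hcast]
      refine (Padic.nonarchimedean _ _).trans (max_le h ?_)
      rw [norm_one]
    rw [phi, phi, dif_pos h, dif_pos hq1, Rmap]
    congr 1
    have hX : mk p (((q + 1 : ℚ)) : ℚ_[p]) hq1 = mk p ((q : ℚ_[p])) h + 1 := by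
      apply Subtype.ext
      rw [PadicInt.coe_add, PadicInt.coe_one, coe_mk, coe_mk, hcast]
    rw [hX, map_add, map_one]
  · have hq1 : ¬ ‖(((q + 1 : ℚ)) : ℚ_[p])‖ ≤ 1 := by
      rw [hcast]
      intro hc
      apply h
      have h2 : ‖((q : ℚ_[p]) + 1) + (-1)‖ ≤ max ‖(q : ℚ_[p]) + 1‖ ‖(-1 : ℚ_[p])‖ :=
        Padic.nonarchimedean _ _
      simpa using h2.trans (max_le hc (by simp))
    rw [phi, phi, dif_neg h, dif_neg hq1, Rmap]

lemma phi_div (q : ℚ) (hq : q ≠ -1) : phi p (q / (q + 1)) = Lmap p (phi p q) := by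
  have hq1 : (q : ℚ) + 1 ≠ 0 := fun hc => hq (by linarith [hc.le, hc.ge])
  have hQ1 : ((q : ℚ_[p])) + 1 ≠ 0 := by
    intro hc
    apply hq1
    have h2 : (((q + 1 : ℚ)) : ℚ_[p]) = 0 := by push_cast; linear_combination hc
    exact_mod_cast h2
  have hcast : (((q / (q + 1) : ℚ)) : ℚ_[p]) = (q : ℚ_[p]) / ((q : ℚ_[p]) + 1) := by
    push_cast; ring
  by_cases h : ‖(q : ℚ_[p])‖ ≤ 1
  · set X : ℤ_[p] := mk p ((q : ℚ_[p])) h with hXdef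
    have hXco : (X : ℚ_[p]) = (q : ℚ_[p]) := rfl
    have hphiq : phi p q = some (PadicInt.toZMod X) := by rw [phi, dif_pos h]
    have hX1co : ((X + 1 : ℤ_[p]) : ℚ_[p]) = (q : ℚ_[p]) + 1 := by
      rw [PadicInt.coe_add, PadicInt.coe_one, hXco]
    by_cases hx : PadicInt.toZMod X + 1 = 0
    · have hx0 : PadicInt.toZMod (X + 1) = 0 := by rw [map_add, map_one, hx]
      rw [toZMod_eq_zero_iff, PadicInt.norm_def, hX1co] at hx0
      have hXne : PadicInt.toZMod X ≠ 0 := by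
        intro hc
        rw [hc, zero_add] at hx
        exact one_ne_zero hx
      have hXnorm : ¬ ‖(q : ℚ_[p])‖ ≤ ((p : ℝ))⁻¹ := by
        intro hc
        apply hXne
        rw [toZMod_eq_zero_iff, PadicInt.norm_def, hXco]
        exact hc
      push_neg at hXnorm
      have hd : ¬ ‖(((q / (q + 1) : ℚ)) : ℚ_[p])‖ ≤ 1 := by
        rw [hcast, norm_div, not_le, one_lt_div (norm_pos_iff.mpr hQ1)]
        exact lt_of_le_of_lt hx0 hXnorm
      rw [phi, dif_neg hd, hphiq, Lmap, if_pos hx]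
    · have hd1 : ‖(q : ℚ_[p]) + 1‖ = 1 := by
        have hx0 : PadicInt.toZMod (X + 1) ≠ 0 := by rw [map_add, map_one]; exact hx
        have hle : ‖X + 1‖ ≤ 1 := PadicInt.norm_le_one _
        have h2 : ¬ ‖X + 1‖ ≤ ((p : ℝ))⁻¹ := by
          intro hc
          exact hx0 ((toZMod_eq_zero_iff p _).mpr hc)
        rw [norm_int_le_inv_iff_lt_one, not_lt] at h2
        rw [← hX1co, ← PadicInt.norm_def]
        linarith
      have hnorm : ‖(((q / (q + 1) : ℚ)) : ℚ_[p])‖ ≤ 1 := by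
        rw [hcast, norm_div, hd1, div_one]
        exact h
      rw [phi, dif_pos hnorm, hphiq, Lmap, if_neg hx]
      congr 1
      have hmul : mk p ((((q / (q + 1) : ℚ)) : ℚ_[p])) hnorm * (X + 1) = X := by
        apply Subtype.ext
        rw [PadicInt.coe_mul, hX1co]
        show (((q / (q + 1) : ℚ)) : ℚ_[p]) * ((q : ℚ_[p]) + 1) = (X : ℚ_[p])
        rw [hcast, div_mul_cancel₀ _ hQ1, hXco]
      have h3 := congrArg PadicInt.toZMod hmul
      rw [map_mul, map_add, map_one] at h3
      rw [eq_div_iff hx]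
      exact h3
  · have hgt : 1 < ‖(q : ℚ_[p])‖ := not_le.mp h
    have hd : ‖(q : ℚ_[p]) + 1‖ = ‖(q : ℚ_[p])‖ := by
      rw [Padic.add_eq_max_of_ne (by rw [norm_one]; exact ne_of_gt hgt)]
      rw [norm_one, max_eq_left hgt.le]
    have hQ0 : ‖(q : ℚ_[p])‖ ≠ 0 := ne_of_gt (lt_trans one_pos hgt)
    have hnorm : ‖(((q / (q + 1) : ℚ)) : ℚ_[p])‖ ≤ 1 := by
      rw [hcast, norm_div, hd, div_self hQ0]
    rw [phi, phi, dif_neg h, dif_pos hnorm, Lmap]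
    congr 1
    rw [show (1 : ZMod p) = PadicInt.toZMod 1 from (map_one _).symm, toZMod_eq_iff,
      PadicInt.norm_def, PadicInt.coe_sub, PadicInt.coe_one]
    show ‖(((q / (q + 1) : ℚ)) : ℚ_[p]) - 1‖ ≤ _
    have he : (((q / (q + 1) : ℚ)) : ℚ_[p]) - 1 = -1 / ((q : ℚ_[p]) + 1) := by
      rw [hcast]
      field_simp
      ring
    rw [he, norm_le_inv_iff_lt_one, norm_div, norm_neg, norm_one, hd,
      div_lt_one (lt_trans one_pos hgt)]
    exact hgt

lemma cwGen_pos : ∀ n, ∀ q ∈ cwGen n, 0 < q := by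
  intro n
  induction n with
  | zero => intro q hq; simp [cwGen] at hq; simp [hq]
  | succ n ih =>
    intro q hq
    rw [cwGen, List.mem_flatMap] at hq
    obtain ⟨a, ha, hmem⟩ := hq
    have hpos := ih a ha
    simp only [List.mem_cons, List.mem_singleton] at hmem
    rcases hmem with rfl | hmem
    · exact div_pos hpos (by linarith)
    · simp only [List.not_mem_nil, or_false] at hmem
      subst hmem
      linarith

lemma countP_flatMap_pair {α β : Type*} (l : List α) (f g : α → β) (P : β → Bool) :
    ((l.flatMap fun a => [f a, g a]).countP P) =
      l.countP (fun a => P (f a)) + l.countP (fun a => P (g a)) := by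
  induction l with
  | nil => simp
  | cons a l ih =>
    rw [List.flatMap_cons, List.countP_append, ih, List.countP_cons, List.countP_cons,
      List.countP_cons, List.countP_cons, List.countP_nil]
    omega

lemma countP_congr' {α : Type*} (l : List α) (P Q : α → Bool) (h : ∀ a ∈ l, P a = Q a) :
    l.countP P = l.countP Q := by
  induction l with
  | nil => simp
  | cons a l ih =>
    rw [List.countP_cons, List.countP_cons, ih (fun b hb => h b (List.mem_cons_of_mem a hb)),
      h a List.mem_cons_self]

/-- Number of elements of the `n`-th generation in residue state `s`. -/
noncomputable def cnt (n : ℕ) (s : S p) : ℕ :=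
  (cwGen n).countP fun q => decide (phi p q = s)

lemma cnt_succ (n : ℕ) (s : S p) :
    cnt p (n + 1) s = cnt p n (Linv p s) + cnt p n (Rinv p s) := by
  rw [cnt, cwGen, countP_flatMap_pair]
  congr 1
  · apply countP_congr'
    intro q hq
    have hpos := cwGen_pos n q hq
    have hne : q ≠ -1 := by intro hc; rw [hc] at hpos; norm_num at hpos
    rw [decide_eq_decide, phi_div p q hne, Lmap_eq_iff]
  · apply countP_congr'
    intro q hq
    rw [decide_eq_decide, phi_add_one p q, Rmap_eq_iff]

lemma sum_countP_phi (l : List ℚ) :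
    ∑ s : S p, l.countP (fun q => decide (phi p q = s)) = l.length := by
  induction l with
  | nil => simp
  | cons a l ih =>
    simp only [List.countP_cons, List.length_cons, Finset.sum_add_distrib, ih]
    congr 1
    have h2 : (fun s : S p => if decide (phi p a = s) = true then (1 : ℕ) else 0)
        = fun s => if phi p a = s then 1 else 0 := by
      funext s
      simp
    rw [h2, Finset.sum_ite_eq]
    simp

lemma cwGen_length (n : ℕ) : (cwGen n).length = 2 ^ n := by
  induction n with
  | zero => rfl
  | succ n ih =>
    rw [cwGen, List.length_flatMap]
    have h2 : (List.map (fun a => [a / (a + 1), a + 1].length) (cwGen n))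
        = List.map (fun _ => 2) (cwGen n) := List.map_congr_left (fun q _ => rfl)
    rw [h2, List.map_const', List.sum_replicate, smul_eq_mul, ih, pow_succ]

lemma cnt_sum (n : ℕ) : ∑ s : S p, cnt p n s = 2 ^ n := by
  rw [← cwGen_length n]
  exact sum_countP_phi p (cwGen n)

instance : NeZero p := ⟨hp.out.ne_zero⟩

/-- Normalized proportions. -/
noncomputable def u (n : ℕ) (s : S p) : ℝ := (cnt p n s : ℝ) / 2 ^ n

/-- Maximum proportion. -/
noncomputable def Mx (n : ℕ) : ℝ := Finset.univ.sup' Finset.univ_nonempty (u p n)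

/-- Minimum proportion. -/
noncomputable def mn (n : ℕ) : ℝ := Finset.univ.inf' Finset.univ_nonempty (u p n)

lemma u_succ (n : ℕ) (s : S p) :
    u p (n + 1) s = (u p n (Linv p s) + u p n (Rinv p s)) / 2 := by
  rw [u, u, u, cnt_succ, pow_succ]
  push_cast
  field_simp

lemma le_Mx (n : ℕ) (s : S p) : u p n s ≤ Mx p n :=
  Finset.le_sup' _ (Finset.mem_univ s)

lemma mn_le (n : ℕ) (s : S p) : mn p n ≤ u p n s :=
  Finset.inf'_le _ (Finset.mem_univ s)

lemma Mx_succ (n : ℕ) : Mx p (n + 1) ≤ Mx p n := by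
  apply Finset.sup'_le
  intro s _
  rw [u_succ]
  have h1 := le_Mx p n (Linv p s)
  have h2 := le_Mx p n (Rinv p s)
  linarith

lemma mn_succ (n : ℕ) : mn p n ≤ mn p (n + 1) := by
  apply Finset.le_inf'
  intro s _
  rw [u_succ]
  have h1 := mn_le p n (Linv p s)
  have h2 := mn_le p n (Rinv p s)
  linarith

lemma Mx_add (n k : ℕ) : Mx p (n + k) ≤ Mx p n := by
  induction k with
  | zero => exact le_rfl
  | succ k ih => exact le_trans (Mx_succ p (n + k)) ih

lemma mn_add (n k : ℕ) : mn p n ≤ mn p (n + k) := by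
  induction k with
  | zero => exact le_rfl
  | succ k ih => exact le_trans ih (mn_succ p (n + k))

/-- One inverse step, `false ↦ Linv`, `true ↦ Rinv`. -/
def stepInv : Bool → S p → S p
  | false, s => Linv p s
  | true, s => Rinv p s

/-- Iterated inverse steps. -/
def applyW : List Bool → S p → S p
  | [], s => s
  | b :: w, s => applyW w (stepInv p b s)

lemma applyW_append (w1 w2 : List Bool) (s : S p) :
    applyW p (w1 ++ w2) s = applyW p w2 (applyW p w1 s) := by
  induction w1 generalizing s with
  | nil => rfl
  | cons b w ih => rw [List.cons_append, applyW, applyW, ih]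

lemma u_word_le (w : List Bool) (n : ℕ) (s : S p) :
    u p (n + w.length) s ≤
      Mx p n - (1 / 2 : ℝ) ^ w.length * (Mx p n - u p n (applyW p w s)) := by
  induction w generalizing s with
  | nil =>
    simp only [List.length_nil, Nat.add_zero, pow_zero, one_mul, applyW]
    linarith [le_Mx p n s]
  | cons b w ih =>
    have hlen : n + (b :: w).length = (n + w.length) + 1 := by
      rw [List.length_cons]
      omega
    rw [hlen, u_succ]
    have happ : applyW p (b :: w) s = applyW p w (stepInv p b s) := rfl
    rw [happ]
    have h1 := ih (stepInv p b s)
    have he : (1 / 2 : ℝ) ^ (b :: w).length *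
          (Mx p n - u p n (applyW p w (stepInv p b s)))
        = ((1 / 2 : ℝ) ^ w.length *
          (Mx p n - u p n (applyW p w (stepInv p b s)))) / 2 := by
      rw [List.length_cons, pow_succ]
      ring
    cases b with
    | false =>
      have h2 : u p (n + w.length) (Rinv p s) ≤ Mx p n :=
        (le_Mx p _ _).trans (Mx_add p n w.length)
      simp only [stepInv] at h1 he ⊢
      linarith
    | true =>
      have h2 : u p (n + w.length) (Linv p s) ≤ Mx p n :=
        (le_Mx p _ _).trans (Mx_add p n w.length)
      simp only [stepInv] at h1 he ⊢
      linarith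

lemma u_word_ge (w : List Bool) (n : ℕ) (s : S p) :
    mn p n + (1 / 2 : ℝ) ^ w.length * (u p n (applyW p w s) - mn p n)
      ≤ u p (n + w.length) s := by
  induction w generalizing s with
  | nil =>
    simp only [List.length_nil, Nat.add_zero, pow_zero, one_mul, applyW]
    linarith [mn_le p n s]
  | cons b w ih =>
    have hlen : n + (b :: w).length = (n + w.length) + 1 := by
      rw [List.length_cons]
      omega
    rw [hlen, u_succ]
    have happ : applyW p (b :: w) s = applyW p w (stepInv p b s) := rfl
    rw [happ]
    have h1 := ih (stepInv p b s)
    have he : (1 / 2 : ℝ) ^ (b :: w).length *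
          (u p n (applyW p w (stepInv p b s)) - mn p n)
        = ((1 / 2 : ℝ) ^ w.length *
          (u p n (applyW p w (stepInv p b s)) - mn p n)) / 2 := by
      rw [List.length_cons, pow_succ]
      ring
    cases b with
    | false =>
      have h2 : mn p n ≤ u p (n + w.length) (Rinv p s) :=
        (mn_add p n w.length).trans (mn_le p _ _)
      simp only [stepInv] at h1 he ⊢
      linarith
    | true =>
      have h2 : mn p n ≤ u p (n + w.length) (Linv p s) :=
        (mn_add p n w.length).trans (mn_le p _ _)
      simp only [stepInv] at h1 he ⊢
      linarith

lemma applyW_replicate_none (k : ℕ) :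
    applyW p (List.replicate k true) none = none := by
  induction k with
  | zero => rfl
  | succ k ih => rw [List.replicate_succ, applyW, stepInv, Rinv, ih]

lemma applyW_replicate_some (k : ℕ) (x : ZMod p) :
    applyW p (List.replicate k true) (some x) = some (x - (k : ZMod p)) := by
  induction k generalizing x with
  | zero => simp [applyW]
  | succ k ih =>
    rw [List.replicate_succ, applyW, stepInv, Rinv, ih]
    congr 1
    push_cast
    ring

lemma reach_none (s : S p) : ∃ w : List Bool, w.length ≤ p ∧ applyW p w s = none := by
  cases s with
  | none => exact ⟨[], Nat.zero_le p, rfl⟩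
  | some y =>
    refine ⟨List.replicate (y - 1).val true ++ [false], ?_, ?_⟩
    · rw [List.length_append, List.length_replicate]
      have := ZMod.val_lt (y - 1)
      simp only [List.length_cons, List.length_nil]
      omega
    · rw [applyW_append, applyW_replicate_some, ZMod.natCast_rightInverse (y - 1)]
      have h1 : y - (y - 1) = 1 := by ring
      rw [h1]
      simp [applyW, stepInv, Linv]

lemma reach_from_none (t : S p) : ∃ w : List Bool, w.length ≤ p ∧ applyW p w none = t := by
  cases t with
  | none => exact ⟨[], Nat.zero_le p, rfl⟩
  | some y =>
    refine ⟨false :: List.replicate (-1 - y).val true, ?_, ?_⟩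
    · rw [List.length_cons, List.length_replicate]
      have := ZMod.val_lt (-1 - y)
      omega
    · rw [applyW, stepInv, Linv, applyW_replicate_some,
        ZMod.natCast_rightInverse (-1 - y)]
      congr 1
      ring

lemma reach (s t : S p) : ∃ w : List Bool, w.length = 2 * p ∧ applyW p w s = t := by
  obtain ⟨w1, h1, e1⟩ := reach_none p s
  obtain ⟨w2, h2, e2⟩ := reach_from_none p t
  refine ⟨w1 ++ (List.replicate (2 * p - w1.length - w2.length) true ++ w2), ?_, ?_⟩
  · rw [List.length_append, List.length_append, List.length_replicate]
    omega
  · rw [applyW_append, e1, applyW_append, applyW_replicate_none, e2]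

lemma exists_eq_Mx (n : ℕ) : ∃ s : S p, Mx p n = u p n s := by
  obtain ⟨i, _, hi⟩ := Finset.exists_mem_eq_sup' (Finset.univ_nonempty) (u p n)
  exact ⟨i, hi⟩

lemma exists_eq_mn (n : ℕ) : ∃ s : S p, mn p n = u p n s := by
  obtain ⟨i, _, hi⟩ := Finset.exists_mem_eq_inf' (Finset.univ_nonempty) (u p n)
  exact ⟨i, hi⟩

lemma contraction (n : ℕ) :
    Mx p (n + 2 * p) - mn p (n + 2 * p)
      ≤ (1 - 2 * (1 / 2 : ℝ) ^ (2 * p)) * (Mx p n - mn p n) := by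
  obtain ⟨sM, hsM⟩ := exists_eq_Mx p (n + 2 * p)
  obtain ⟨sm, hsm⟩ := exists_eq_mn p (n + 2 * p)
  obtain ⟨tm, htm⟩ := exists_eq_mn p n
  obtain ⟨tM, htM⟩ := exists_eq_Mx p n
  obtain ⟨w1, hl1, he1⟩ := reach p sM tm
  obtain ⟨w2, hl2, he2⟩ := reach p sm tM
  have h1 := u_word_le p w1 n sM
  have h2 := u_word_ge p w2 n sm
  rw [hl1, he1, ← htm] at h1
  rw [hl2, he2, ← htM] at h2
  rw [hsM, hsm]
  linarith

/-- The oscillation of the proportions. -/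
noncomputable def DD (n : ℕ) : ℝ := Mx p n - mn p n

lemma DD_nonneg (n : ℕ) : 0 ≤ DD p n := by
  have h := (mn_le p n none).trans (le_Mx p n none)
  simp only [DD]
  linarith

lemma DD_antitone {m n : ℕ} (h : m ≤ n) : DD p n ≤ DD p m := by
  obtain ⟨k, rfl⟩ := Nat.exists_eq_add_of_le h
  have h1 := Mx_add p m k
  have h2 := mn_add p m k
  simp only [DD]
  linarith

lemma half_pow_le : 2 * (1 / 2 : ℝ) ^ (2 * p) ≤ 1 := by
  have hp1 : 1 ≤ 2 * p := by have := hp.out.pos; omega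
  have h := pow_le_pow_of_le_one (by norm_num : (0:ℝ) ≤ 1/2) (by norm_num : (1/2:ℝ) ≤ 1) hp1
  rw [pow_one] at h
  linarith

lemma DD_le_geom (k : ℕ) : ∀ n, 2 * p * k ≤ n →
    DD p n ≤ (1 - 2 * (1 / 2 : ℝ) ^ (2 * p)) ^ k * DD p 0 := by
  induction k with
  | zero =>
    intro n _
    simpa using DD_antitone p (Nat.zero_le n)
  | succ k ih =>
    intro n hn
    have h1 : DD p n ≤ DD p (2 * p * k + 2 * p) := by
      apply DD_antitone
      have := hp.out.pos
      calc 2 * p * k + 2 * p = 2 * p * (k + 1) := by ring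
      _ ≤ n := hn
    have h2 := contraction p (2 * p * k)
    have h3 := ih (2 * p * k) le_rfl
    have hr : 0 ≤ 1 - 2 * (1 / 2 : ℝ) ^ (2 * p) := by linarith [half_pow_le p]
    calc DD p n ≤ (1 - 2 * (1 / 2 : ℝ) ^ (2 * p)) * DD p (2 * p * k) := by
          simp only [DD] at h1 h2 ⊢
          linarith
      _ ≤ (1 - 2 * (1 / 2 : ℝ) ^ (2 * p)) * ((1 - 2 * (1 / 2 : ℝ) ^ (2 * p)) ^ k * DD p 0) :=
          mul_le_mul_of_nonneg_left h3 hr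
      _ = (1 - 2 * (1 / 2 : ℝ) ^ (2 * p)) ^ (k + 1) * DD p 0 := by ring

lemma DD_tendsto : Filter.Tendsto (DD p) Filter.atTop (nhds 0) := by
  have hppos := hp.out.pos
  have hr0 : 0 ≤ 1 - 2 * (1 / 2 : ℝ) ^ (2 * p) := by linarith [half_pow_le p]
  have hr1 : 1 - 2 * (1 / 2 : ℝ) ^ (2 * p) < 1 := by
    have : (0:ℝ) < (1 / 2 : ℝ) ^ (2 * p) := by positivity
    linarith
  have hgeom : Filter.Tendsto (fun k : ℕ => (1 - 2 * (1 / 2 : ℝ) ^ (2 * p)) ^ k * DD p 0)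
      Filter.atTop (nhds 0) := by
    have := (tendsto_pow_atTop_nhds_zero_of_lt_one hr0 hr1).mul_const (DD p 0)
    simpa using this
  have hdiv : Filter.Tendsto (fun n : ℕ => n / (2 * p)) Filter.atTop Filter.atTop := by
    apply Filter.tendsto_atTop_atTop.mpr
    intro b
    refine ⟨b * (2 * p), fun a ha => ?_⟩
    rw [Nat.le_div_iff_mul_le (by omega)]
    exact le_trans le_rfl (by omega)
  apply squeeze_zero (DD_nonneg p) (g := fun n => (1 - 2 * (1 / 2 : ℝ) ^ (2 * p)) ^ (n / (2 * p)) * DD p 0)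
  · intro n
    apply DD_le_geom
    have := Nat.div_mul_le_self n (2 * p)
    calc 2 * p * (n / (2 * p)) = n / (2 * p) * (2 * p) := by ring
      _ ≤ n := Nat.div_mul_le_self n (2 * p)
  · exact hgeom.comp hdiv

lemma sum_u (n : ℕ) : ∑ s : S p, u p n s = 1 := by
  have h := cnt_sum p n
  have h2 : (∑ s : S p, (cnt p n s : ℝ)) = 2 ^ n := by exact_mod_cast congrArg Nat.cast h
  simp only [u, ← Finset.sum_div, h2]
  field_simp

lemma card_S : (Finset.univ : Finset (S p)).card = p + 1 := by
  simp [Finset.card_univ, ZMod.card]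

lemma mn_le_inv (n : ℕ) : mn p n ≤ 1 / ((p : ℝ) + 1) := by
  have h : (Finset.univ : Finset (S p)).card • mn p n ≤ ∑ s : S p, u p n s :=
    Finset.card_nsmul_le_sum _ _ _ (fun s _ => mn_le p n s)
  rw [sum_u, card_S, nsmul_eq_mul] at h
  rw [le_div_iff₀ (by positivity : (0:ℝ) < (p : ℝ) + 1)]
  push_cast at h ⊢
  linarith

lemma inv_le_Mx (n : ℕ) : 1 / ((p : ℝ) + 1) ≤ Mx p n := by
  have h : ∑ s : S p, u p n s ≤ (Finset.univ : Finset (S p)).card • Mx p n :=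
    Finset.sum_le_card_nsmul _ _ _ (fun s _ => le_Mx p n s)
  rw [sum_u, card_S, nsmul_eq_mul] at h
  rw [div_le_iff₀ (by positivity : (0:ℝ) < (p : ℝ) + 1)]
  push_cast at h ⊢
  linarith

lemma u_tendsto (s : S p) :
    Filter.Tendsto (fun n => u p n s) Filter.atTop (nhds (1 / ((p : ℝ) + 1))) := by
  rw [← tendsto_sub_nhds_zero_iff]
  apply squeeze_zero_norm (a := DD p) ?_ (DD_tendsto p)
  intro n
  rw [Real.norm_eq_abs, abs_le]
  have h1 := le_Mx p n s
  have h2 := mn_le p n s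
  have h3 := mn_le_inv p n
  have h4 := inv_le_Mx p n
  simp only [DD]
  constructor <;> linarith

end CWAux
/-- For a `p`-adic integer `z`, the limiting proportion of fractions `a/b` in
the `n`-th generation of the Calkin–Wilf tree with `ord_p(a/b − z) ≥ 1`
(equivalently `‖a/b − z‖_p ≤ 1/p`) equals `1/(p+1)`. -/
theorem cw_padic_ball_one (p : ℕ) [hp : Fact p.Prime] (z : ℤ_[p]) :
    Filter.Tendsto
      (fun n : ℕ =>
        (((cwGen (n - 1)).countP fun q =>
          decide (‖(q : ℚ_[p]) - (z : ℚ_[p])‖ ≤ ((p : ℝ))⁻¹)) : ℝ) / 2 ^ (n - 1))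
      Filter.atTop (nhds (1 / ((p : ℝ) + 1))) := by
  have heq : (fun n : ℕ =>
        (((cwGen (n - 1)).countP fun q =>
          decide (‖(q : ℚ_[p]) - (z : ℚ_[p])‖ ≤ ((p : ℝ))⁻¹)) : ℝ) / 2 ^ (n - 1))
      = fun n : ℕ => CWAux.u p (n - 1) (some (PadicInt.toZMod z)) := by
    funext n
    have hc : ((cwGen (n - 1)).countP fun q =>
          decide (‖(q : ℚ_[p]) - (z : ℚ_[p])‖ ≤ ((p : ℝ))⁻¹))
        = CWAux.cnt p (n - 1) (some (PadicInt.toZMod z)) := by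
      have hmap : ((cwGen (n - 1)).flatMap fun a : ℚ => [((a : ℚ_[p]))])
          = (cwGen (n - 1)).map (fun a : ℚ => (a : ℚ_[p])) := by
        induction cwGen (n - 1) with
        | nil => rfl
        | cons a l ih => simp [ih]
      simp only [List.bind_eq_flatMap, List.pure_def]
      rw [hmap, List.countP_map, CWAux.cnt]
      apply CWAux.countP_congr'
      intro q _
      rw [Function.comp_apply, decide_eq_decide]
      exact CWAux.norm_cond_iff p z q
    rw [hc]
    rfl
  rw [heq]
  exact (CWAux.u_tendsto p (some (PadicInt.toZMod z))).comp (Filter.tendsto_sub_atTop_nat 1)
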